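/- arXiv:2409.16811 — 5 statements merged into one kernel-verified Lean document; each statement's English description precedes it below -/
import Mathlib

section
/- Let b > 0, Ω > 0 and let m be a positive integer; set α = (1/(2b))·(2bm/(2bm+Ω))^m, β = 1/(2b) and δ = Ω/(2b(2bm+Ω)). Then ∫₀^∞ α e^{−βx} Σ_{i=0}^∞ (m)_i (δx)^i/(i!)² dx = 1, i.e., the shadowed-Rician density integrates to one. -/
open MeasureTheory

/-- Rising factorial (Pochhammer symbol) with real base: `(a)_n = a (a+1) ⋯ (a+n-1)`. -/
noncomputable def rf (a : ℝ) : ℕ → ℝ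
  | 0 => 1
  | n + 1 => rf a n * (a + n)

lemma rf_fact (k : ℕ) : ∀ n, (k.factorial : ℝ) * rf ((k : ℝ) + 1) n = ((k + n).factorial : ℝ) := by
  intro n
  induction n with
  | zero => simp [rf]
  | succ n ih =>
      show (k.factorial : ℝ) * (rf ((k:ℝ)+1) n * (((k:ℝ)+1) + n)) = _
      rw [← mul_assoc, ih, show k + (n+1) = (k + n) + 1 by ring, Nat.factorial_succ]
      push_cast; ring

lemma rf_eq_choose (k n : ℕ) : rf ((k : ℝ) + 1) n = ((n + k).choose k : ℝ) * n.factorial := by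
  have h1 := rf_fact k n
  have h2 : ((n+k).choose k : ℝ) * k.factorial * n.factorial = ((n + k).factorial : ℝ) := by
    have := Nat.choose_mul_factorial_mul_factorial (Nat.le_add_left k n)
    rw [Nat.add_sub_cancel] at this
    exact_mod_cast congrArg (Nat.cast (R := ℝ)) this
  have hk : (k.factorial : ℝ) ≠ 0 := Nat.cast_ne_zero.2 k.factorial_ne_zero
  rw [Nat.add_comm k n] at h1
  refine mul_left_cancel₀ hk ?_
  rw [h1, ← h2]; ring

lemma intOn_pow_exp {β : ℝ} (hβ : 0 < β) (i : ℕ) :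
    IntegrableOn (fun x : ℝ => x ^ i * Real.exp (-β * x)) (Set.Ioi 0) := by
  have h := integrableOn_rpow_mul_exp_neg_mul_rpow (p := 1) (s := (i : ℝ))
    (lt_of_lt_of_le neg_one_lt_zero (Nat.cast_nonneg i)) one_pos hβ
  refine h.congr_fun (fun x hx => ?_) measurableSet_Ioi
  dsimp only
  rw [Real.rpow_one, Real.rpow_natCast]

lemma integral_pow_exp {β : ℝ} (hβ : 0 < β) (i : ℕ) :
    ∫ x in Set.Ioi (0:ℝ), x ^ i * Real.exp (-β * x) = i.factorial / β ^ (i+1) := by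
  have h := Real.integral_rpow_mul_exp_neg_mul_Ioi (a := (i:ℝ)+1) (by positivity) hβ
  rw [show ((i:ℝ)+1) - 1 = (i:ℝ) by ring, Real.Gamma_nat_eq_factorial] at h
  rw [show (∫ x in Set.Ioi (0:ℝ), x ^ i * Real.exp (-β * x))
      = ∫ x in Set.Ioi (0:ℝ), x ^ (i:ℝ) * Real.exp (-(β * x)) from
    setIntegral_congr_fun measurableSet_Ioi (fun x hx => by
      rw [Real.rpow_natCast, neg_mul]), h, one_div, Real.inv_rpow hβ.le,
    show ((i:ℝ)+1) = ((i+1 : ℕ):ℝ) by push_cast; ring, Real.rpow_natCast]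
  ring


/-- The shadowed-Rician density with parameters `b > 0`, `Ω > 0`, positive integer `m`,
`α = (1/(2b))·(2bm/(2bm+Ω))^m`, `β = 1/(2b)`, `δ = Ω/(2b(2bm+Ω))` integrates to one over
`(0, ∞)`. -/
theorem stmt_2 (b Ωp α β δ : ℝ) (m : ℕ) (hb : 0 < b) (hΩ : 0 < Ωp) (hm : 0 < m)
    (hα : α = 1 / (2 * b) * ((2 * b * m) / (2 * b * m + Ωp)) ^ m)
    (hβ : β = 1 / (2 * b))
    (hδ : δ = Ωp / (2 * b * (2 * b * m + Ωp))) :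
    ∫ x in Set.Ioi (0 : ℝ),
        α * Real.exp (-β * x) *
          ∑' i : ℕ, rf (m : ℝ) i * (δ * x) ^ i / ((i.factorial : ℝ)) ^ 2 = 1 := by
  obtain ⟨k, rfl⟩ : ∃ k, m = k + 1 := ⟨m - 1, (Nat.succ_pred_eq_of_pos hm).symm⟩
  have hmc : ((k+1:ℕ):ℝ) = (k:ℝ) + 1 := by push_cast; ring
  set S : ℝ := 2 * b * ((k+1:ℕ):ℝ) + Ωp with hS
  have hS0 : 0 < S := by rw [hS, hmc]; positivity
  have hβ0 : 0 < β := by rw [hβ]; positivity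
  have hβne : β ≠ 0 := ne_of_gt hβ0
  have hδ0 : 0 < δ := by rw [hδ]; positivity
  have hδβ : δ < β := by
    rw [hδ, hβ, div_lt_div_iff₀ (by positivity) (by positivity)]
    have : Ωp < S := by rw [hS, hmc]; nlinarith
    nlinarith
  set t : ℝ := δ / β with htdef
  have ht0 : 0 ≤ t := le_of_lt (by positivity)
  have ht1 : t < 1 := (div_lt_one hβ0).2 hδβ
  have htn : ‖t‖ < 1 := by rw [Real.norm_eq_abs, abs_of_nonneg ht0]; exact ht1
  have hα0 : 0 ≤ α := by rw [hα]; positivity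
  have hrf : ∀ i, rf ((k+1:ℕ):ℝ) i = ((i + k).choose k : ℝ) * i.factorial := by
    intro i; rw [hmc]; exact rf_eq_choose k i
  set F : ℕ → ℝ → ℝ := fun i x =>
    α * Real.exp (-β * x) * (rf ((k+1:ℕ):ℝ) i * (δ * x) ^ i / (i.factorial : ℝ) ^ 2) with hF
  have hFrw : ∀ i, F i = fun x =>
      (α * ((i + k).choose k : ℝ) * δ ^ i / i.factorial) * (x ^ i * Real.exp (-β * x)) := by
    intro i; funext x
    have hfne : (i.factorial : ℝ) ≠ 0 := Nat.cast_ne_zero.2 i.factorial_ne_zero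
    simp only [hF, hrf i, mul_pow]
    field_simp
  have hint : ∀ i, Integrable (F i) (volume.restrict (Set.Ioi 0)) := by
    intro i; rw [hFrw i]; exact (intOn_pow_exp hβ0 i).const_mul _
  have hval : ∀ i, ∫ x in Set.Ioi (0:ℝ), F i x = α / β * (((i + k).choose k : ℝ) * t ^ i) := by
    intro i
    have hfne : (i.factorial : ℝ) ≠ 0 := Nat.cast_ne_zero.2 i.factorial_ne_zero
    have hδt : δ = t * β := by rw [htdef]; field_simp
    rw [hFrw i, integral_const_mul, integral_pow_exp hβ0 i, hδt, mul_pow, pow_succ]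
    field_simp
  have hnonneg : ∀ i, ∀ x ∈ Set.Ioi (0:ℝ), 0 ≤ F i x := by
    intro i x hx
    have hx0 : (0:ℝ) < x := hx
    simp only [hF, hrf i]
    refine mul_nonneg (mul_nonneg hα0 (Real.exp_nonneg _))
      (div_nonneg ?_ (pow_nonneg (Nat.cast_nonneg _) 2))
    exact mul_nonneg (mul_nonneg (Nat.cast_nonneg _) (Nat.cast_nonneg _))
      (pow_nonneg (by positivity) i)
  have hnormval : ∀ i, ∫ x in Set.Ioi (0:ℝ), ‖F i x‖
      = α / β * (((i + k).choose k : ℝ) * t ^ i) := by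
    intro i
    rw [← hval i]
    exact setIntegral_congr_fun measurableSet_Ioi fun x hx =>
      Real.norm_of_nonneg (hnonneg i x hx)
  have hsum : Summable fun i => ∫ x in Set.Ioi (0:ℝ), ‖F i x‖ := by
    simp only [hnormval]
    exact (summable_choose_mul_geometric_of_norm_lt_one k htn).mul_left _
  have key := integral_tsum_of_summable_integral_norm hint hsum
  calc (∫ x in Set.Ioi (0:ℝ), α * Real.exp (-β * x) *
          ∑' i : ℕ, rf ((k+1:ℕ):ℝ) i * (δ * x) ^ i / (i.factorial : ℝ) ^ 2)
      = ∫ x in Set.Ioi (0:ℝ), ∑' i, F i x := by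
        refine integral_congr_ae (Filter.Eventually.of_forall fun x => ?_)
        exact (tsum_mul_left).symm
    _ = ∑' i, ∫ x in Set.Ioi (0:ℝ), F i x := key.symm
    _ = α / β * ∑' i, (((i + k).choose k : ℝ) * t ^ i) := by
        simp only [hval]; exact tsum_mul_left
    _ = α / β * (1 / (1 - t) ^ (k + 1)) := by
        rw [tsum_choose_mul_geometric_of_norm_lt_one k htn]
    _ = 1 := by
        have h1t : 1 - t = 2 * b * ((k+1:ℕ):ℝ) / S := by
          rw [htdef, hδ, hβ, hS]
          field_simp
          ring
        rw [h1t, hα, hβ]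
        have hq0 : (0:ℝ) < 2 * b * ((k+1:ℕ):ℝ) / S := by rw [hmc]; positivity
        field_simp
end

section
/- Let m be a positive integer, α > 0, and 0 < δ < β. Then for every x ≥ 0, ∫₀^x α e^{−βt} Σ_{i=0}^∞ (m)_i (δt)^i/(i!)² dt = α Σ_{i=0}^∞ [(m)_i δ^i / ((i!)² β^{i+1})] γ(i+1, βx), where γ(s,y) = ∫₀^y t^{s−1} e^{−t} dt is the lower incomplete Gamma function; i.e., the CDF of the shadowed-Rician density admits this series representation in terms of lower incomplete Gamma functions. -/
/-- Lower incomplete Gamma function `γ(s, x) = ∫₀^x t^(s-1) e^(-t) dt`. -/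
noncomputable def lincGamma (s x : ℝ) : ℝ := ∫ t in (0 : ℝ)..x, t ^ (s - 1) * Real.exp (-t)

lemma lincGamma_nat (i : ℕ) (y : ℝ) :
    lincGamma ((i : ℝ) + 1) y = ∫ t in (0:ℝ)..y, t ^ i * Real.exp (-t) := by
  unfold lincGamma
  simp [Real.rpow_natCast]

lemma key_int (β : ℝ) (hβ : 0 < β) (i : ℕ) (x : ℝ) :
    ∫ t in (0:ℝ)..x, t ^ i * Real.exp (-(β * t)) =
      (β ^ (i + 1))⁻¹ * lincGamma ((i : ℝ) + 1) (β * x) := by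
  rw [lincGamma_nat]
  have h := intervalIntegral.integral_comp_mul_left (a := (0:ℝ)) (b := x)
      (fun u => u ^ i * Real.exp (-u)) hβ.ne'
  simp only [mul_zero] at h
  have h2 : ∀ t : ℝ, (β * t) ^ i * Real.exp (-(β * t)) = β ^ i * (t ^ i * Real.exp (-(β * t))) := by
    intro t; rw [mul_pow]; ring
  simp only [h2] at h
  rw [intervalIntegral.integral_const_mul] at h
  have hβi : (β : ℝ) ^ i ≠ 0 := pow_ne_zero _ hβ.ne'
  field_simp at h ⊢
  rw [pow_succ]
  rw [smul_eq_mul] at h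
  rw [← mul_assoc, mul_comm _ (β ^ i), h]
  field_simp

lemma rf_factorial (m : ℕ) (hm : 0 < m) (i : ℕ) :
    ((m - 1 + i).factorial : ℝ) = ((m - 1).factorial : ℝ) * rf m i := by
  induction i with
  | zero => simp [rf]
  | succ n ih =>
    have h1 : m - 1 + (n + 1) = (m - 1 + n) + 1 := rfl
    rw [h1, Nat.factorial_succ, Nat.cast_mul, ih]
    have hcast : ((m - 1 + n + 1 : ℕ) : ℝ) = (m : ℝ) + n := by
      have : m - 1 + n + 1 = m + n := by omega
      rw [this]; push_cast; ring
    rw [hcast, rf]; ring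

lemma rf_eq_choose_s3 (m : ℕ) (hm : 0 < m) (i : ℕ) :
    rf m i = ((m - 1 + i).choose i : ℝ) * (i.factorial : ℝ) := by
  have h := Nat.choose_mul_factorial_mul_factorial (Nat.le_add_left i (m - 1))
  have h2 : (m - 1 + i) - i = m - 1 := by omega
  rw [h2] at h
  have h3 : ((m - 1 + i).factorial : ℝ)
      = ((m - 1 + i).choose i : ℝ) * (i.factorial : ℝ) * ((m - 1).factorial : ℝ) := by
    exact_mod_cast congrArg (Nat.cast (R := ℝ)) h.symm
  have h4 := rf_factorial m hm i
  have hfac : ((m - 1).factorial : ℝ) ≠ 0 := by positivity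
  rw [h3] at h4
  refine mul_left_cancel₀ hfac ?_
  linear_combination -h4

lemma choose_le_two_pow (n k : ℕ) : n.choose k ≤ 2 ^ n := by
  rcases le_or_gt k n with h | h
  · calc n.choose k ≤ ∑ j ∈ Finset.range (n + 1), n.choose j :=
        Finset.single_le_sum (fun _ _ => Nat.zero_le _) (Finset.mem_range.mpr (by omega))
      _ = 2 ^ n := Nat.sum_range_choose n
  · simp [Nat.choose_eq_zero_of_lt h]

lemma rf_nonneg (m : ℕ) (hm : 0 < m) (i : ℕ) : 0 ≤ rf m i := by
  rw [rf_eq_choose_s3 m hm i]; positivity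

lemma summable_aux (m : ℕ) (hm : 0 < m) (y : ℝ) (hy : 0 ≤ y) :
    Summable (fun i : ℕ => rf m i * y ^ i / (i.factorial : ℝ) ^ 2) := by
  apply Summable.of_nonneg_of_le
      (f := fun i => 2 ^ (m - 1) * ((2 * y) ^ i / (i.factorial : ℝ)))
  · intro i
    have := rf_nonneg m hm i
    positivity
  · intro i
    have hfac : (0:ℝ) < (i.factorial : ℝ) := by positivity
    rw [rf_eq_choose_s3 m hm i]
    have heq : ((m - 1 + i).choose i : ℝ) * (i.factorial : ℝ) * y ^ i / (i.factorial : ℝ) ^ 2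
        = ((m - 1 + i).choose i : ℝ) * y ^ i / (i.factorial : ℝ) := by
      field_simp
    have heq2 : (2:ℝ) ^ (m - 1) * ((2 * y) ^ i / (i.factorial : ℝ))
        = ((2:ℝ) ^ (m - 1) * 2 ^ i) * y ^ i / (i.factorial : ℝ) := by
      rw [mul_pow]; ring
    rw [heq, heq2]
    have h1 : ((m - 1 + i).choose i : ℝ) ≤ (2:ℝ) ^ (m - 1) * 2 ^ i := by
      rw [← pow_add]
      exact_mod_cast choose_le_two_pow (m - 1 + i) i
    gcongr
  · exact (Real.summable_pow_div_factorial (2 * y)).mul_left _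

/-- The CDF of the shadowed-Rician density `f_H(t) = α e^{-βt} ∑_i (m)_i (δt)^i/(i!)²`
admits the series representation
`F(x) = α ∑_i (m)_i δ^i / ((i!)² β^(i+1)) · γ(i+1, βx)` in terms of lower incomplete Gamma
functions. -/
theorem stmt_3 (α β δ : ℝ) (m : ℕ) (hm : 0 < m) (hα : 0 < α) (hδ : 0 < δ) (hδβ : δ < β)
    (x : ℝ) (hx : 0 ≤ x) :
    ∫ t in (0 : ℝ)..x,
        α * Real.exp (-β * t) *
          ∑' i : ℕ, rf (m : ℝ) i * (δ * t) ^ i / ((i.factorial : ℝ)) ^ 2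
      = α * ∑' i : ℕ,
          rf (m : ℝ) i * δ ^ i / (((i.factorial : ℝ)) ^ 2 * β ^ (i + 1)) *
            lincGamma ((i : ℝ) + 1) (β * x) := by
  have hβ : 0 < β := hδ.trans hδβ
  have hpt : ∀ t : ℝ,
      α * Real.exp (-β * t) * ∑' i : ℕ, rf (m : ℝ) i * (δ * t) ^ i / ((i.factorial : ℝ)) ^ 2
        = ∑' i : ℕ,
            α * Real.exp (-β * t) * (rf (m : ℝ) i * (δ * t) ^ i / ((i.factorial : ℝ)) ^ 2) :=
    fun t => (tsum_mul_left).symm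
  rw [intervalIntegral.integral_of_le hx]
  simp only [hpt]
  have hint : ∀ i : ℕ, MeasureTheory.IntegrableOn
      (fun t => α * Real.exp (-β * t) * (rf (m : ℝ) i * (δ * t) ^ i / ((i.factorial : ℝ)) ^ 2))
      (Set.Ioc 0 x) := by
    intro i
    apply Continuous.integrableOn_Ioc
    fun_prop
  have hbound : ∀ i : ℕ, (∫ t in Set.Ioc (0:ℝ) x,
        ‖α * Real.exp (-β * t) * (rf (m : ℝ) i * (δ * t) ^ i / ((i.factorial : ℝ)) ^ 2)‖)
      ≤ x * (α * (rf (m : ℝ) i * (δ * x) ^ i / ((i.factorial : ℝ)) ^ 2)) := by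
    intro i
    have hC : ∀ t ∈ Set.Ioc (0:ℝ) x,
        ‖α * Real.exp (-β * t) * (rf (m : ℝ) i * (δ * t) ^ i / ((i.factorial : ℝ)) ^ 2)‖
        ≤ α * (rf (m : ℝ) i * (δ * x) ^ i / ((i.factorial : ℝ)) ^ 2) := by
      intro t ht
      have ht0 : 0 < t := ht.1
      have htx : t ≤ x := ht.2
      have hrf := rf_nonneg m hm i
      have hfac : (0:ℝ) < (i.factorial : ℝ) := by positivity
      have hexp : Real.exp (-β * t) ≤ 1 := by
        rw [Real.exp_le_one_iff]; nlinarith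
      have hpow : (δ * t) ^ i ≤ (δ * x) ^ i := by
        apply pow_le_pow_left₀ (by positivity)
        nlinarith
      have hFnn : 0 ≤ α * Real.exp (-β * t) *
          (rf (m : ℝ) i * (δ * t) ^ i / ((i.factorial : ℝ)) ^ 2) := by
        have := Real.exp_pos (-β * t)
        positivity
      rw [Real.norm_eq_abs, abs_of_nonneg hFnn]
      calc α * Real.exp (-β * t) * (rf (m : ℝ) i * (δ * t) ^ i / ((i.factorial : ℝ)) ^ 2)
          ≤ α * 1 * (rf (m : ℝ) i * (δ * x) ^ i / ((i.factorial : ℝ)) ^ 2) := by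
            apply mul_le_mul
            · exact mul_le_mul_of_nonneg_left hexp hα.le
            · gcongr
            · positivity
            · positivity
        _ = α * (rf (m : ℝ) i * (δ * x) ^ i / ((i.factorial : ℝ)) ^ 2) := by ring
    calc (∫ t in Set.Ioc (0:ℝ) x,
          ‖α * Real.exp (-β * t) * (rf (m : ℝ) i * (δ * t) ^ i / ((i.factorial : ℝ)) ^ 2)‖)
        ≤ ∫ _t in Set.Ioc (0:ℝ) x,
            α * (rf (m : ℝ) i * (δ * x) ^ i / ((i.factorial : ℝ)) ^ 2) := by
          apply MeasureTheory.setIntegral_mono_on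
          · exact (hint i).norm
          · exact (MeasureTheory.integrableOn_const_iff).mpr
              (Or.inr (by simp [Real.volume_Ioc, ENNReal.ofReal_lt_top]))
          · exact measurableSet_Ioc
          · exact hC
      _ = x * (α * (rf (m : ℝ) i * (δ * x) ^ i / ((i.factorial : ℝ)) ^ 2)) := by
          rw [MeasureTheory.setIntegral_const]
          simp [Real.volume_Ioc, ENNReal.toReal_ofReal hx, hx]
  have hsum : Summable fun i : ℕ => ∫ t in Set.Ioc (0:ℝ) x,
      ‖α * Real.exp (-β * t) * (rf (m : ℝ) i * (δ * t) ^ i / ((i.factorial : ℝ)) ^ 2)‖ := by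
    apply Summable.of_nonneg_of_le
        (f := fun i => x * (α * (rf (m : ℝ) i * (δ * x) ^ i / ((i.factorial : ℝ)) ^ 2)))
    · intro i
      exact MeasureTheory.integral_nonneg (fun t => norm_nonneg _)
    · exact hbound
    · exact ((summable_aux m hm (δ * x) (by positivity)).mul_left α).mul_left x
  rw [← MeasureTheory.integral_tsum_of_summable_integral_norm hint hsum]
  rw [← tsum_mul_left]
  refine tsum_congr fun i => ?_
  rw [← intervalIntegral.integral_of_le hx]
  have hFt : ∀ t : ℝ,
      α * Real.exp (-β * t) * (rf (m : ℝ) i * (δ * t) ^ i / ((i.factorial : ℝ)) ^ 2)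
      = (α * rf (m : ℝ) i * δ ^ i / ((i.factorial : ℝ)) ^ 2) * (t ^ i * Real.exp (-(β * t))) := by
    intro t
    simp only [neg_mul, mul_pow]
    ring
  simp only [hFt]
  rw [intervalIntegral.integral_const_mul, key_int β hβ]
  have hfac : ((i.factorial : ℝ)) ≠ 0 := by positivity
  have hβ' : β ≠ 0 := hβ.ne'
  field_simp
end

section
/- Let f_H be the shadowed-Rician density (parameters b, Ω, m, α, β, δ), let g be the Gamma(k,η) density, and let c > 0. Then for every x > 0, ∫₀^∞ y f_H(xy/c) g(y) dy = (α/(Γ(k)η^k)) Σ_{l=0}^{m−1} [(−1)^l (1−m)_l / (l!)²] (δx/c)^l Γ(l+k+1) ((β−δ)x/c + 1/η)^{−(l+k+1)}. -/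
open MeasureTheory

/-- Shadowed-Rician density with parameters `α, β, δ` and positive integer `m`:
`f_H(x) = α e^{-βx} ∑_i (m)_i (δx)^i / (i!)²` for `x > 0`, and `0` otherwise. -/
noncomputable def srDensity (α β δ : ℝ) (m : ℕ) (x : ℝ) : ℝ :=
  if 0 < x then
    α * Real.exp (-β * x) * ∑' i : ℕ, rf (m : ℝ) i * (δ * x) ^ i / ((i.factorial : ℝ)) ^ 2
  else 0

/-- Gamma(k, η) density: `g(y) = y^(k-1) e^(-y/η) / (Γ(k) η^k)` for `y > 0`, `0` otherwise. -/
noncomputable def gammaDensity (k η : ℝ) (y : ℝ) : ℝ :=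
  if 0 < y then y ^ (k - 1) * Real.exp (-y / η) / (Real.Gamma k * η ^ k) else 0

lemma rf_nat (m : ℕ) : ∀ n, rf (m : ℝ) n = (Nat.ascFactorial m n : ℝ)
  | 0 => by simp [rf]
  | n + 1 => by
    rw [rf, rf_nat m n, Nat.ascFactorial_succ]
    push_cast
    ring

lemma rf_neg (m : ℕ) (hm : 0 < m) :
    ∀ j, rf (1 - (m : ℝ)) j = (-1) ^ j * ((m - 1).descFactorial j : ℝ)
  | 0 => by simp [rf]
  | j + 1 => by
    rw [rf, rf_neg m hm j, Nat.descFactorial_succ]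
    rcases le_or_gt m j with h | h
    · have hD : (m - 1).descFactorial j = 0 :=
        Nat.descFactorial_eq_zero_iff_lt.mpr (by omega)
      simp [hD]
    · have hj : j ≤ m - 1 := by omega
      have : ((m - 1 - j : ℕ) : ℝ) = (m : ℝ) - 1 - j := by
        push_cast [Nat.cast_sub hj, Nat.cast_sub (by omega : 1 ≤ m)]
        ring
      rw [Nat.cast_mul, this]
      push_cast
      ring

lemma coeff_id (m : ℕ) (hm : 0 < m) (N : ℕ) :
    ∑ j ∈ Finset.range (N + 1),
        ((m - 1).descFactorial j : ℝ) / (((j.factorial : ℝ)) ^ 2 * (((N - j).factorial : ℝ)))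
      = (Nat.ascFactorial m N : ℝ) / ((N.factorial : ℝ)) ^ 2 := by
  have h1 : ∀ j ∈ Finset.range (N + 1),
      ((m - 1).descFactorial j : ℝ) / (((j.factorial : ℝ)) ^ 2 * (((N - j).factorial : ℝ)))
        = (((m - 1).choose j * N.choose j : ℕ) : ℝ) / (N.factorial : ℝ) := by
    intro j hj
    have hjN : j ≤ N := Finset.mem_range_succ_iff.mp hj
    have hD : (m - 1).descFactorial j = j.factorial * (m - 1).choose j :=
      Nat.descFactorial_eq_factorial_mul_choose _ _
    have hNf : N.choose j * j.factorial * (N - j).factorial = N.factorial :=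
      Nat.choose_mul_factorial_mul_factorial hjN
    have hj0 : (0:ℝ) < (j.factorial : ℝ) := by exact_mod_cast j.factorial_pos
    have hNj0 : (0:ℝ) < ((N - j).factorial : ℝ) := by exact_mod_cast (N - j).factorial_pos
    have hN0 : (0:ℝ) < (N.factorial : ℝ) := by exact_mod_cast N.factorial_pos
    rw [div_eq_div_iff (by positivity) hN0.ne']
    norm_cast
    rw [hD, ← hNf]
    ring
  rw [Finset.sum_congr rfl h1, ← Finset.sum_div, ← Nat.cast_sum]
  have hV : ∑ j ∈ Finset.range (N + 1), ((m - 1).choose j * N.choose j)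
      = (m - 1 + N).choose N := by
    rw [Nat.add_choose_eq, Finset.Nat.sum_antidiagonal_eq_sum_range_succ_mk]
    refine Finset.sum_congr rfl fun j hj => ?_
    rw [Nat.choose_symm (Finset.mem_range_succ_iff.mp hj)]
  rw [hV]
  have hA : Nat.ascFactorial m N = N.factorial * (m - 1 + N).choose N := by
    have h' : m - 1 + N = m + N - 1 := by omega
    rw [h', Nat.ascFactorial_eq_factorial_mul_choose']
  rw [hA]
  have hN0 : (0:ℝ) < (N.factorial : ℝ) := by exact_mod_cast N.factorial_pos
  push_cast
  field_simp

lemma kummer (m : ℕ) (hm : 0 < m) (z : ℝ) :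
    (∑' i : ℕ, rf (m : ℝ) i * z ^ i / ((i.factorial : ℝ)) ^ 2)
      = Real.exp z * ∑ l ∈ Finset.range m,
          ((m - 1).descFactorial l : ℝ) * z ^ l / ((l.factorial : ℝ)) ^ 2 := by
  set f : ℕ → ℝ := fun n => z ^ n / n.factorial with hf_def
  set g : ℕ → ℝ := fun j => ((m - 1).descFactorial j : ℝ) * z ^ j / ((j.factorial : ℝ)) ^ 2
    with hg_def
  have hg0 : ∀ j ∉ Finset.range m, g j = 0 := by
    intro j hj
    simp only [Finset.mem_range, not_lt] at hj
    have : (m - 1).descFactorial j = 0 := Nat.descFactorial_eq_zero_iff_lt.mpr (by omega)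
    simp [hg_def, this]
  have hf : Summable fun n => ‖f n‖ := by
    refine (Real.summable_pow_div_factorial |z|).congr fun n => ?_
    simp [hf_def, Real.norm_eq_abs, abs_div, abs_pow, Nat.abs_cast]
  have hg : Summable fun j => ‖g j‖ :=
    summable_of_ne_finset_zero (s := Finset.range m) fun j hj => by rw [hg0 j hj, norm_zero]
  have hexp : Real.exp z = ∑' n, f n := by
    rw [Real.exp_eq_exp_ℝ, NormedSpace.exp_eq_tsum_div]
  have hgs : ∑ l ∈ Finset.range m, g l = ∑' j, g j := (tsum_eq_sum hg0).symm
  rw [hexp, hgs, tsum_mul_tsum_eq_tsum_sum_antidiagonal_of_summable_norm hf hg]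
  refine tsum_congr fun N => ?_
  rw [Finset.Nat.sum_antidiagonal_eq_sum_range_succ_mk]
  have hterm : ∀ k ∈ Finset.range (N + 1),
      f k * g (N - k)
        = z ^ N * (((m - 1).descFactorial (N - k) : ℝ)
            / ((((N - k).factorial : ℝ)) ^ 2 * (((N - (N - k)).factorial : ℝ)))) := by
    intro k hk
    have hkN : k ≤ N := Finset.mem_range_succ_iff.mp hk
    have h1 : N - (N - k) = k := by omega
    have h2 : k + (N - k) = N := by omega
    have h3 : z ^ k * z ^ (N - k) = z ^ N := by rw [← pow_add, h2]
    simp only [hf_def, hg_def]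
    rw [h1, ← h3]
    ring
  rw [Finset.sum_congr rfl hterm, ← Finset.mul_sum]
  have hrefl : ∑ k ∈ Finset.range (N + 1),
      (((m - 1).descFactorial (N - k) : ℝ)
        / ((((N - k).factorial : ℝ)) ^ 2 * (((N - (N - k)).factorial : ℝ))))
      = ∑ j ∈ Finset.range (N + 1),
        ((m - 1).descFactorial j : ℝ) / (((j.factorial : ℝ)) ^ 2 * (((N - j).factorial : ℝ))) := by
    have := Finset.sum_range_reflect (fun j =>
      ((m - 1).descFactorial j : ℝ) / (((j.factorial : ℝ)) ^ 2 * (((N - j).factorial : ℝ))))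
      (N + 1)
    simpa using this
  rw [hrefl, coeff_id m hm N, rf_nat]
  ring

/-- For the shadowed-Rician density `f_H`, the Gamma(k, η) density `g`, and `c > 0`, for
every `x > 0`, `∫₀^∞ y f_H(xy/c) g(y) dy` equals the stated finite sum (the density of the
ratio `cH/I` in polynomial-times-power form). -/
theorem stmt_8 (b Ωp α β δ : ℝ) (m : ℕ) (k η c : ℝ)
    (hb : 0 < b) (hΩ : 0 < Ωp) (hm : 0 < m)
    (hα : α = 1 / (2 * b) * ((2 * b * m) / (2 * b * m + Ωp)) ^ m)
    (hβ : β = 1 / (2 * b))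
    (hδ : δ = Ωp / (2 * b * (2 * b * m + Ωp)))
    (hk : 0 < k) (hη : 0 < η) (hc : 0 < c)
    (x : ℝ) (hx : 0 < x) :
    ∫ y in Set.Ioi (0 : ℝ), y * srDensity α β δ m (x * y / c) * gammaDensity k η y
      = α / (Real.Gamma k * η ^ k) *
          ∑ l ∈ Finset.range m,
            ((-1 : ℝ) ^ l * rf (1 - (m : ℝ)) l / ((l.factorial : ℝ)) ^ 2)
              * (δ * x / c) ^ l * Real.Gamma ((l : ℝ) + k + 1)
              * ((β - δ) * x / c + 1 / η) ^ (-((l : ℝ) + k + 1)) := by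
  have hm' : (0:ℝ) < (m:ℝ) := by exact_mod_cast hm
  have hβδ : 0 < β - δ := by
    have h : β - δ = (2 * b * (m:ℝ)) / (2 * b * (2 * b * (m:ℝ) + Ωp)) := by
      rw [hβ, hδ]
      have h1 : (0:ℝ) < 2 * b * (m:ℝ) + Ωp := by positivity
      field_simp
      ring
    rw [h]; positivity
  set s := (β - δ) * x / c + 1 / η with hs_def
  have hs : 0 < s := by rw [hs_def]; positivity
  have hpoint : ∀ y ∈ Set.Ioi (0:ℝ),
      y * srDensity α β δ m (x * y / c) * gammaDensity k η y
        = ∑ l ∈ Finset.range m,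
            (α / (Real.Gamma k * η ^ k)
                * (((m - 1).descFactorial l : ℝ) / ((l.factorial : ℝ)) ^ 2)
                * (δ * x / c) ^ l)
              * (y ^ (((l : ℝ) + k + 1) - 1) * Real.exp (-(s * y))) := by
    intro y hy
    have hy0 : (0:ℝ) < y := hy
    have harg : 0 < x * y / c := by positivity
    rw [srDensity, if_pos harg, gammaDensity, if_pos hy0, kummer m hm (δ * (x * y / c)),
      Finset.mul_sum, Finset.mul_sum, Finset.mul_sum, Finset.sum_mul]
    refine Finset.sum_congr rfl fun l _ => ?_
    have e1 : Real.exp (-β * (x * y / c)) * Real.exp (δ * (x * y / c)) * Real.exp (-y / η)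
        = Real.exp (-(s * y)) := by
      rw [← Real.exp_add, ← Real.exp_add]
      congr 1
      rw [hs_def]
      field_simp
      ring
    have e2 : y ^ (l + 1) * y ^ (k - 1) = y ^ (((l : ℝ) + k + 1) - 1) := by
      rw [← Real.rpow_natCast y (l + 1), ← Real.rpow_add hy0]
      congr 1
      push_cast
      ring
    have e3 : (δ * (x * y / c)) ^ l = (δ * x / c) ^ l * y ^ l := by
      rw [show δ * (x * y / c) = (δ * x / c) * y by ring, mul_pow]
    calc y * (α * Real.exp (-β * (x * y / c)) * (Real.exp (δ * (x * y / c))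
            * (((m - 1).descFactorial l : ℝ) * (δ * (x * y / c)) ^ l / ((l.factorial : ℝ)) ^ 2)))
          * (y ^ (k - 1) * Real.exp (-y / η) / (Real.Gamma k * η ^ k))
        = (α / (Real.Gamma k * η ^ k)
            * (((m - 1).descFactorial l : ℝ) / ((l.factorial : ℝ)) ^ 2) * (δ * x / c) ^ l)
          * ((y ^ (l + 1) * y ^ (k - 1))
            * (Real.exp (-β * (x * y / c)) * Real.exp (δ * (x * y / c)) * Real.exp (-y / η))) := by
          rw [e3]; ring
      _ = _ := by rw [e2, e1]
  rw [setIntegral_congr_fun measurableSet_Ioi hpoint]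
  have hint : ∀ l ∈ Finset.range m,
      Integrable (fun y : ℝ =>
          (α / (Real.Gamma k * η ^ k)
              * (((m - 1).descFactorial l : ℝ) / ((l.factorial : ℝ)) ^ 2)
              * (δ * x / c) ^ l)
            * (y ^ (((l : ℝ) + k + 1) - 1) * Real.exp (-(s * y))))
        (volume.restrict (Set.Ioi 0)) := by
    intro l _
    have hl : (0:ℝ) ≤ (l:ℝ) := Nat.cast_nonneg l
    have base := integrableOn_rpow_mul_exp_neg_mul_rpow
      (s := ((l : ℝ) + k + 1) - 1) (p := 1) (b := s) (by linarith) zero_lt_one hs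
    have base' : IntegrableOn
        (fun y : ℝ => y ^ (((l : ℝ) + k + 1) - 1) * Real.exp (-(s * y))) (Set.Ioi 0) := by
      simpa [Real.rpow_one, neg_mul] using base
    exact base'.const_mul _
  rw [integral_finset_sum _ hint]
  have hInt : ∀ l ∈ Finset.range m,
      ∫ y in Set.Ioi (0:ℝ),
          (α / (Real.Gamma k * η ^ k)
              * (((m - 1).descFactorial l : ℝ) / ((l.factorial : ℝ)) ^ 2)
              * (δ * x / c) ^ l)
            * (y ^ (((l : ℝ) + k + 1) - 1) * Real.exp (-(s * y)))
        = (α / (Real.Gamma k * η ^ k)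
              * (((m - 1).descFactorial l : ℝ) / ((l.factorial : ℝ)) ^ 2)
              * (δ * x / c) ^ l)
            * ((1 / s) ^ ((l : ℝ) + k + 1) * Real.Gamma ((l : ℝ) + k + 1)) := by
    intro l _
    have hl : (0:ℝ) ≤ (l:ℝ) := Nat.cast_nonneg l
    rw [integral_const_mul, Real.integral_rpow_mul_exp_neg_mul_Ioi (by linarith) hs]
  rw [Finset.sum_congr rfl hInt, Finset.mul_sum]
  refine Finset.sum_congr rfl fun l _ => ?_
  rw [rf_neg m hm l]
  have h11 : ((-1:ℝ)) ^ l * ((-1:ℝ) ^ l * ((m - 1).descFactorial l : ℝ))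
      = ((m - 1).descFactorial l : ℝ) := by
    rw [← mul_assoc, ← mul_pow]; norm_num
  rw [h11]
  have hrp : (1 / s) ^ ((l : ℝ) + k + 1) = s ^ (-((l : ℝ) + k + 1)) := by
    rw [one_div, Real.inv_rpow hs.le, ← Real.rpow_neg hs.le]
  rw [hrp]
  ring
end

section
/- Let α, c > 0, let m be a positive integer, let 0 < δ < β, let k > 0, η > 0, let (c_l)_{l} be given by c_l = (−1)^l (1−m)_l / (l!)², and define h(x) = (α/(Γ(k)η^k)) Σ_{l=0}^{m−1} c_l (δx/c)^l Γ(l+k+1) ((β−δ)x/c + 1/η)^{−(l+k+1)} for x > 0. If 0 ≤ ζ_l < ζ_u and η(β−δ)ζ_u/c < 1, then ∫_{ζ_l}^{ζ_u} x h(x) dx = (α/(Γ(k)η^k)) Σ_{l=0}^{m−1} c_l (δ/c)^l Γ(l+k+1) η^{l+k+1} (1/(l+2)) [ (ζ_u)^{l+2} G_l(ζ_u) − (ζ_l)^{l+2} G_l(ζ_l) ], where G_l(ζ) = Σ_{n=0}^∞ [(l+k+1)_n (l+2)_n / ((l+3)_n n!)] (−η(β−δ)ζ/c)^n. -/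
section Aux
open Filter Set

lemma rf_succ (a : ℝ) (n : ℕ) : rf a (n + 1) = rf a n * (a + n) := rfl

lemma rf_pos {a : ℝ} (ha : 0 < a) (n : ℕ) : 0 < rf a n := by
  induction n with
  | zero => exact one_pos
  | succ n ih => exact mul_pos ih (by positivity)

lemma rf_nonneg_s10 {a : ℝ} (ha : 0 ≤ a) (n : ℕ) : 0 ≤ rf a n := by
  induction n with
  | zero => exact zero_le_one
  | succ n ih => exact mul_nonneg ih (by positivity)

lemma rf_shift (b : ℝ) (n : ℕ) : rf b n * (b + n) = b * rf (b + 1) n := by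
  induction n with
  | zero => simp [rf]
  | succ n ih =>
    rw [rf_succ, rf_succ]
    push_cast
    linear_combination (b + (n:ℝ) + 1) * ih

lemma summable_rf (s q : ℝ) (hq : |q| < 1) :
    Summable (fun n : ℕ => rf s n / n.factorial * q ^ n) := by
  rcases eq_or_ne q 0 with rfl | hq0
  · apply summable_of_ne_finset_zero (s := {0})
    intro n hn
    simp only [Finset.mem_singleton] at hn
    simp [zero_pow hn]
  · have hq' : 0 < |q| := abs_pos.2 hq0
    set r : ℝ := (|q| + 1) / 2 with hr
    have hr1 : r < 1 := by rw [hr]; linarith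
    have hqr : |q| < r := by rw [hr]; linarith
    apply summable_of_ratio_norm_eventually_le hr1
    obtain ⟨N, hN⟩ := exists_nat_ge ((|s| * |q|) / (r - |q|))
    filter_upwards [eventually_ge_atTop N] with n hn
    have hnN : ((N : ℝ)) ≤ n := by exact_mod_cast hn
    have key : (|s| + n) * |q| ≤ r * (n + 1) := by
      have h1 : (|s| * |q|) ≤ (n : ℝ) * (r - |q|) := by
        have := hN.trans hnN
        have h2 : 0 < r - |q| := by linarith
        calc |s| * |q| = ((|s| * |q|) / (r - |q|)) * (r - |q|) := by field_simp
          _ ≤ (n : ℝ) * (r - |q|) := by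
              apply mul_le_mul_of_nonneg_right this h2.le
      nlinarith
    have hfact : ((n + 1).factorial : ℝ) = (n + 1) * n.factorial := by
      rw [Nat.factorial_succ]; push_cast; ring
    rw [Real.norm_eq_abs, Real.norm_eq_abs]
    have h1 : |rf s (n + 1) / (n + 1).factorial * q ^ (n + 1)|
        = |rf s n / n.factorial * q ^ n| * (|s + n| * |q| / (n + 1)) := by
      rw [rf_succ, hfact, pow_succ]
      have e1 : |((n:ℝ)+1) * n.factorial| = ((n:ℝ)+1) * n.factorial := abs_of_nonneg (by positivity)
      have e2 : |(n.factorial : ℝ)| = (n.factorial : ℝ) := abs_of_nonneg (by positivity)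
      simp only [abs_mul, abs_div, e1, e2]
      have hfn : (0 : ℝ) < n.factorial := by positivity
      field_simp
    rw [h1]
    have h2 : |s + n| * |q| / (n + 1) ≤ r := by
      rw [div_le_iff₀ (by positivity)]
      calc |s + n| * |q| ≤ (|s| + n) * |q| := by
            apply mul_le_mul_of_nonneg_right _ (abs_nonneg q)
            calc |s + n| ≤ |s| + |(n : ℝ)| := abs_add_le _ _
              _ = |s| + n := by rw [Nat.abs_cast]
        _ ≤ r * (n + 1) := key
    calc |rf s n / n.factorial * q ^ n| * (|s + n| * |q| / (n + 1))
        ≤ |rf s n / n.factorial * q ^ n| * r := by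
          apply mul_le_mul_of_nonneg_left h2 (abs_nonneg _)
      _ = r * |rf s n / n.factorial * q ^ n| := mul_comm _ _

lemma summable_rf_n (s q : ℝ) (hq : |q| < 1) :
    Summable (fun n : ℕ => rf s n / n.factorial * n * q ^ n) := by
  rcases eq_or_ne q 0 with rfl | hq0
  · apply summable_of_ne_finset_zero (s := {0})
    intro n hn
    simp only [Finset.mem_singleton] at hn
    simp [zero_pow hn]
  · have hq' : 0 < |q| := abs_pos.2 hq0
    set r : ℝ := (|q| + 1) / 2 with hr
    have hr1 : r < 1 := by rw [hr]; linarith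
    have hqr : |q| < r := by rw [hr]; linarith
    apply summable_of_ratio_norm_eventually_le hr1
    obtain ⟨N, hN⟩ := exists_nat_ge ((|s| * |q|) / (r - |q|))
    filter_upwards [eventually_ge_atTop (max N 1)] with n hn
    have hn1 : 1 ≤ n := le_trans (le_max_right _ _) hn
    have hnN : ((N : ℝ)) ≤ n := by exact_mod_cast le_trans (le_max_left _ _) hn
    have hnR : (1 : ℝ) ≤ n := by exact_mod_cast hn1
    have key : (|s| + n) * |q| ≤ r * n := by
      have h1 : (|s| * |q|) ≤ (n : ℝ) * (r - |q|) := by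
        have h2 : 0 < r - |q| := by linarith
        have := ((div_le_iff₀ h2).1 (hN.trans hnN))
        linarith
      nlinarith
    have hfact : ((n + 1).factorial : ℝ) = (n + 1) * n.factorial := by
      rw [Nat.factorial_succ]; push_cast; ring
    rw [Real.norm_eq_abs, Real.norm_eq_abs]
    have h1 : |rf s (n + 1) / (n + 1).factorial * (n + 1 : ℕ) * q ^ (n + 1)|
        = |rf s n / n.factorial * n * q ^ n| * (|s + n| * |q| / n) := by
      rw [rf_succ, hfact, pow_succ]
      have e1 : |((n:ℝ)+1) * n.factorial| = ((n:ℝ)+1) * n.factorial := abs_of_nonneg (by positivity)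
      have e2 : |(n.factorial : ℝ)| = (n.factorial : ℝ) := abs_of_nonneg (by positivity)
      have e3 : |((n:ℝ)+1)| = ((n:ℝ)+1) := abs_of_nonneg (by positivity)
      have e4 : |((n:ℕ):ℝ)| = (n:ℝ) := Nat.abs_cast n
      push_cast
      simp only [abs_mul, abs_div, e1, e2, e3, e4]
      have hfn : (0 : ℝ) < n.factorial := by positivity
      have hnpos : (0:ℝ) < n := by linarith
      field_simp
    push_cast at h1 ⊢
    rw [h1]
    have h2 : |s + n| * |q| / n ≤ r := by
      rw [div_le_iff₀ (by linarith)]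
      calc |s + n| * |q| ≤ (|s| + n) * |q| := by
            apply mul_le_mul_of_nonneg_right _ (abs_nonneg q)
            calc |s + n| ≤ |s| + |(n : ℝ)| := abs_add_le _ _
              _ = |s| + n := by rw [Nat.abs_cast]
        _ ≤ r * n := key
      
    calc |rf s n / n.factorial * n * q ^ n| * (|s + n| * |q| / n)
        ≤ |rf s n / n.factorial * n * q ^ n| * r := by
          apply mul_le_mul_of_nonneg_left h2 (abs_nonneg _)
      _ = r * |rf s n / n.factorial * n * q ^ n| := mul_comm _ _

lemma binomial_tsum (s : ℝ) (hs : 0 < s) (t : ℝ) (ht : |t| < 1) :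
    ∑' n : ℕ, rf s n / n.factorial * t ^ n = (1 - t) ^ (-s) := by
  set r : ℝ := (|t| + 1) / 2 with hrdef
  have hr1 : r < 1 := by rw [hrdef]; linarith
  have hr0 : 0 < r := by rw [hrdef]; positivity
  have htr : |t| < r := by rw [hrdef]; linarith
  set S : ℝ → ℝ := fun y => ∑' n : ℕ, rf s n / n.factorial * y ^ n with hSdef
  set u : ℕ → ℝ := fun n => rf s n / n.factorial * n * r ^ n / r with hudef
  have hu_sum : Summable u :=
    (summable_rf_n s r (by rwa [abs_of_pos hr0])).div_const r
  have hbound : ∀ (n : ℕ) (y : ℝ), y ∈ Ioo (-r) r →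
      ‖rf s n / n.factorial * ((n : ℝ) * y ^ (n - 1))‖ ≤ u n := by
    intro n y hy
    have hyr : |y| ≤ r := (abs_lt.2 ⟨hy.1, hy.2⟩).le
    cases n with
    | zero => simp [hudef]
    | succ m =>
      have h1 : u (m + 1) = rf s (m+1) / (m+1).factorial * ((m+1 : ℝ) * r ^ m) := by
        rw [hudef]
        have : r ^ (m + 1) / r = r ^ m := by
          rw [pow_succ]; field_simp
        push_cast
        field_simp
        ring
      rw [h1, Real.norm_eq_abs]
      have hrfpos : 0 ≤ rf s (m+1) / (m+1).factorial := by
        have := rf_nonneg_s10 hs.le (m+1); positivity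
      rw [abs_mul, abs_mul, abs_of_nonneg hrfpos,
        abs_of_nonneg (by positivity : (0:ℝ) ≤ ((m+1 : ℕ) : ℝ))]
      simp only [Nat.add_sub_cancel]
      push_cast
      have hym : |y ^ m| ≤ r ^ m := by
        rw [abs_pow]; exact pow_le_pow_left₀ (abs_nonneg y) hyr m
      have : ((m:ℝ)+1) * |y ^ m| ≤ ((m:ℝ)+1) * r ^ m := by
        apply mul_le_mul_of_nonneg_left hym (by positivity)
      apply mul_le_mul_of_nonneg_left this hrfpos
  have hg0 : Summable (fun n : ℕ => rf s n / n.factorial * (0:ℝ) ^ n) := by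
    apply summable_of_ne_finset_zero (s := {0})
    intro n hn
    simp only [Finset.mem_singleton] at hn
    simp [zero_pow hn]
  have h0mem : (0:ℝ) ∈ Ioo (-r) r := ⟨by linarith, hr0⟩
  have hSderiv : ∀ y ∈ Ioo (-r) r,
      HasDerivAt S (∑' n : ℕ, rf s n / n.factorial * ((n : ℝ) * y ^ (n - 1))) y := by
    intro y hy
    exact hasDerivAt_tsum_of_isPreconnected
      (g := fun n z => rf s n / n.factorial * z ^ n)
      (g' := fun (n : ℕ) (z : ℝ) => rf s n / n.factorial * ((n : ℝ) * z ^ (n - 1)))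
      hu_sum isOpen_Ioo (convex_Ioo _ _).isPreconnected
      (fun n z _ => (hasDerivAt_pow n z).const_mul _) hbound h0mem hg0 hy
  set D : ℝ → ℝ := fun y => ∑' n : ℕ, rf s n / n.factorial * ((n : ℝ) * y ^ (n - 1)) with hDdef
  have hterm : ∀ (n : ℕ) (y : ℝ),
      rf s (n+1) / (n+1).factorial * (((n+1 : ℕ) : ℝ) * y ^ (n + 1 - 1))
        = rf s (n+1) / n.factorial * y ^ n := by
    intro n y
    rw [Nat.factorial_succ, Nat.add_sub_cancel]
    have h1 : ((n:ℝ) + 1) ≠ 0 := by positivity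
    have h2 : ((n.factorial : ℝ)) ≠ 0 := by positivity
    push_cast
    field_simp
  have hB : ∀ y ∈ Ioo (-r) r, (1 - y) * D y = s * S y := by
    intro y hy
    have hy1 : |y| < 1 := lt_trans (abs_lt.2 ⟨hy.1, hy.2⟩) hr1
    have hDsum : Summable (fun n : ℕ => rf s n / n.factorial * ((n : ℝ) * y ^ (n - 1))) :=
      Summable.of_norm_bounded hu_sum (fun n => hbound n y hy)
    have hEsum : Summable (fun n : ℕ => rf s n / n.factorial * n * y ^ n) :=
      summable_rf_n s y hy1
    have hshift' : Summable (fun n : ℕ => rf s (n+1) / n.factorial * y ^ n) := by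
      apply Summable.congr ((summable_nat_add_iff 1).2 hDsum)
      intro n
      exact hterm n y
    have hshift : D y = ∑' n : ℕ, rf s (n+1) / n.factorial * y ^ n := by
      show (∑' n : ℕ, rf s n / n.factorial * ((n : ℝ) * y ^ (n - 1)))
        = ∑' n : ℕ, rf s (n+1) / n.factorial * y ^ n
      rw [hDsum.tsum_eq_zero_add]
      simp only [Nat.cast_zero, zero_mul, mul_zero, zero_add]
      exact tsum_congr (fun n => hterm n y)
    have hyD : y * D y = ∑' n : ℕ, rf s n / n.factorial * n * y ^ n := by
      show (y * ∑' n : ℕ, rf s n / n.factorial * ((n : ℝ) * y ^ (n - 1)))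
        = ∑' n : ℕ, rf s n / n.factorial * n * y ^ n
      rw [← tsum_mul_left]
      apply tsum_congr
      intro n
      cases n with
      | zero => simp
      | succ m =>
        simp only [Nat.add_sub_cancel]
        push_cast
        ring
    have hsplit : (1 - y) * D y = D y - y * D y := by ring
    rw [hsplit, hyD, hshift, ← hshift'.tsum_sub hEsum]
    rw [show s * S y = ∑' n : ℕ, s * (rf s n / n.factorial * y ^ n) from tsum_mul_left.symm]
    apply tsum_congr
    intro n
    rw [rf_succ]
    ring
  set φ : ℝ → ℝ := fun y => (1 - y) ^ s * S y with hφdef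
  have hφ : ∀ y ∈ Ioo (-r) r, HasDerivAt φ 0 y := by
    intro y hy
    have hy2 : 0 < 1 - y := by have := hy.2; linarith
    have hinner : HasDerivAt (fun z : ℝ => 1 - z) (0 - 1) y :=
      (hasDerivAt_const y (1:ℝ)).sub (hasDerivAt_id y)
    have houter := Real.hasDerivAt_rpow_const (x := 1 - y) (p := s) (Or.inl hy2.ne')
    have h1 : HasDerivAt (fun z : ℝ => (1 - z) ^ s) (s * (1 - y) ^ (s - 1) * (0 - 1)) y :=
      HasDerivAt.comp y houter hinner
    have h2 := h1.mul (hSderiv y hy)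
    have hval : s * (1 - y) ^ (s - 1) * (0 - 1) * S y + (1 - y) ^ s * D y = 0 := by
      have hpow : (1 - y) ^ s = (1 - y) ^ (s - 1) * (1 - y) := by
        conv_lhs => rw [show s = s - 1 + 1 by ring]
        rw [Real.rpow_add_one hy2.ne']
      rw [hpow]
      linear_combination ((1 - y) ^ (s - 1)) * hB y hy
    rw [← hval]
    exact h2
  have hsub : Icc (min t 0) (max t 0) ⊆ Ioo (-r) r := by
    intro x hx
    constructor
    · have h1 : -r < min t 0 := lt_min (by linarith [(abs_lt.1 htr).1]) (by linarith)
      linarith [hx.1]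
    · have h2 : max t 0 < r := max_lt (abs_lt.1 htr).2 hr0
      linarith [hx.2]
  have hconst := constant_of_has_deriv_right_zero (f := φ) (a := min t 0) (b := max t 0)
    (fun x hx => (hφ x (hsub hx)).continuousAt.continuousWithinAt)
    (fun x hx => (hφ x (hsub ⟨hx.1, hx.2.le⟩)).hasDerivWithinAt)
  have htmem : t ∈ Icc (min t 0) (max t 0) := ⟨min_le_left _ _, le_max_left _ _⟩
  have h0mem' : (0:ℝ) ∈ Icc (min t 0) (max t 0) := ⟨min_le_right _ _, le_max_right _ _⟩
  have hφt : φ t = φ 0 := by rw [hconst t htmem, hconst 0 h0mem']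
  have hS0 : S 0 = 1 := by
    show (∑' n : ℕ, rf s n / n.factorial * (0:ℝ) ^ n) = 1
    rw [tsum_eq_single 0 (fun n hn => by simp [zero_pow hn])]
    simp [rf]
  have hφ0 : φ 0 = 1 := by
    rw [hφdef]
    simp only [sub_zero, Real.one_rpow, one_mul]
    exact hS0
  have h1t : 0 < 1 - t := by have := (abs_lt.1 ht).2; linarith
  have hfin : (1 - t) ^ s * S t = 1 := hφt.trans hφ0
  have : S t = ((1 - t) ^ s)⁻¹ :=
    eq_inv_of_mul_eq_one_left (by rw [mul_comm]; exact hfin)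
  show S t = (1 - t) ^ (-s)
  rw [Real.rpow_neg h1t.le]
  exact this

lemma key_integral (s a : ℝ) (hs : 0 < s) (ha : 0 < a) (l : ℕ) (ζl ζu : ℝ)
    (h0 : 0 ≤ ζl) (hlu : ζl < ζu) (hb : a * ζu < 1) :
    ∫ x in ζl..ζu, x ^ (l + 1) * (1 + a * x) ^ (-s)
      = (∑' n : ℕ, rf s n / n.factorial * (-a) ^ n * ζu ^ (l + 2 + n) / ((l : ℝ) + 2 + n))
        - ∑' n : ℕ, rf s n / n.factorial * (-a) ^ n * ζl ^ (l + 2 + n) / ((l : ℝ) + 2 + n) := by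
  have hζu0 : 0 < ζu := lt_of_le_of_lt h0 hlu
  set ζ' : ℝ := (ζu + 1 / a) / 2 with hζ'def
  have hζua : ζu < 1 / a := by rw [lt_div_iff₀ ha]; linarith [hb]
  have hζ'u : ζu < ζ' := by rw [hζ'def]; linarith
  have hζ'pos : 0 < ζ' := by rw [hζ'def]; positivity
  have haζ' : a * ζ' < 1 := by
    have h1 : a * ((ζu + 1 / a) / 2) = (a * ζu + 1) / 2 := by field_simp
    rw [hζ'def, h1]; linarith
  set u : ℕ → ℝ := fun n => rf s n / n.factorial * a ^ n * ζ' ^ (l + 1 + n) with hudef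
  have haζ'abs : |a * ζ'| < 1 := by rw [abs_of_pos (by positivity)]; exact haζ'
  have hu_sum : Summable u := by
    apply Summable.congr ((summable_rf s (a * ζ') haζ'abs).mul_left (ζ' ^ (l + 1)))
    intro n
    rw [hudef]
    simp only [mul_pow, pow_add]
    ring
  have hbound : ∀ (n : ℕ), ∀ x ∈ Ioo (-ζ') ζ',
      ‖rf s n / n.factorial * (-a) ^ n * x ^ (l + 1 + n)‖ ≤ u n := by
    intro n x hx
    have hxζ : |x| ≤ ζ' := (abs_lt.2 ⟨hx.1, hx.2⟩).le
    have hrfn : 0 ≤ rf s n / n.factorial := by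
      have := rf_nonneg_s10 hs.le n; positivity
    rw [Real.norm_eq_abs, abs_mul, abs_mul, abs_of_nonneg hrfn, abs_pow, abs_pow, abs_neg,
      abs_of_pos ha]
    rw [hudef]
    apply mul_le_mul_of_nonneg_left _ (by positivity)
    exact pow_le_pow_left₀ (abs_nonneg x) hxζ _
  have hg0 : Summable (fun n : ℕ =>
      rf s n / n.factorial * (-a) ^ n * (0:ℝ) ^ (l + 2 + n) / ((l : ℝ) + 2 + n)) := by
    apply Summable.congr summable_zero
    intro n
    rw [zero_pow (by omega : l + 2 + n ≠ 0)]
    ring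
  have hmem0 : (0:ℝ) ∈ Ioo (-ζ') ζ' := ⟨by linarith, hζ'pos⟩
  have hF : ∀ x ∈ Ioo (-ζ') ζ',
      HasDerivAt (fun z => ∑' n : ℕ,
          rf s n / n.factorial * (-a) ^ n * z ^ (l + 2 + n) / ((l : ℝ) + 2 + n))
        (x ^ (l + 1) * (1 + a * x) ^ (-s)) x := by
    intro x hx
    have hg : ∀ (n : ℕ), ∀ z ∈ Ioo (-ζ') ζ',
        HasDerivAt (fun z => rf s n / n.factorial * (-a) ^ n * z ^ (l + 2 + n) / ((l : ℝ) + 2 + n))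
          (rf s n / n.factorial * (-a) ^ n * z ^ (l + 1 + n)) z := by
      intro n z _
      have h1 := ((hasDerivAt_pow (l + 2 + n) z).const_mul
        (rf s n / n.factorial * (-a) ^ n)).div_const ((l : ℝ) + 2 + n)
      refine h1.congr_deriv ?_
      have h2 : l + 2 + n - 1 = l + 1 + n := by omega
      have h3 : ((l : ℝ) + 2 + n) ≠ 0 := by positivity
      rw [h2]
      push_cast
      field_simp
    have h1 := hasDerivAt_tsum_of_isPreconnected
      (g := fun (n : ℕ) z => rf s n / n.factorial * (-a) ^ n * z ^ (l + 2 + n) / ((l : ℝ) + 2 + n))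
      (g' := fun (n : ℕ) z => rf s n / n.factorial * (-a) ^ n * z ^ (l + 1 + n))
      hu_sum isOpen_Ioo (convex_Ioo _ _).isPreconnected hg hbound hmem0 hg0 hx
    have hax : |(-(a * x))| < 1 := by
      rw [abs_neg, abs_mul, abs_of_pos ha]
      calc a * |x| < a * ζ' := by
            apply mul_lt_mul_of_pos_left (abs_lt.2 ⟨hx.1, hx.2⟩) ha
        _ < 1 := haζ'
    have h2 : (∑' n : ℕ, rf s n / n.factorial * (-a) ^ n * x ^ (l + 1 + n))
        = x ^ (l + 1) * (1 + a * x) ^ (-s) := by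
      calc (∑' n : ℕ, rf s n / n.factorial * (-a) ^ n * x ^ (l + 1 + n))
          = ∑' n : ℕ, x ^ (l + 1) * (rf s n / n.factorial * (-(a * x)) ^ n) := by
            apply tsum_congr
            intro n
            rw [pow_add, show -(a * x) = (-a) * x from by ring, mul_pow]
            ring
        _ = x ^ (l + 1) * ∑' n : ℕ, rf s n / n.factorial * (-(a * x)) ^ n := tsum_mul_left
        _ = x ^ (l + 1) * (1 - -(a * x)) ^ (-s) := by
            rw [binomial_tsum s hs _ hax]
        _ = x ^ (l + 1) * (1 + a * x) ^ (-s) := by rw [sub_neg_eq_add]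
    rw [← h2]
    exact h1
  have hsubset : Set.uIcc ζl ζu ⊆ Ioo (-ζ') ζ' := by
    rw [Set.uIcc_of_le hlu.le]
    intro x hx
    exact ⟨by linarith [hx.1], by linarith [hx.2]⟩
  have hcont : ContinuousOn (fun x : ℝ => x ^ (l + 1) * (1 + a * x) ^ (-s))
      (Set.uIcc ζl ζu) := by
    apply ContinuousOn.mul (continuous_pow (l + 1)).continuousOn
    apply ContinuousOn.rpow_const
    · exact (continuous_const.add (continuous_const.mul continuous_id)).continuousOn
    · intro x hx
      rw [Set.uIcc_of_le hlu.le] at hx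
      have : 0 < 1 + a * x := by nlinarith [hx.1, ha]
      exact Or.inl this.ne'
  have hint : IntervalIntegrable (fun x : ℝ => x ^ (l + 1) * (1 + a * x) ^ (-s))
      MeasureTheory.volume ζl ζu := hcont.intervalIntegrable
  exact intervalIntegral.integral_eq_sub_of_hasDerivAt (fun x hx => hF x (hsubset hx)) hint

lemma bridge (s a : ℝ) (hs : 0 < s) (l : ℕ) (ζ : ℝ) :
    (∑' n : ℕ, rf s n / n.factorial * (-a) ^ n * ζ ^ (l + 2 + n) / ((l : ℝ) + 2 + n))
      = ζ ^ (l + 2) * (1 / ((l : ℝ) + 2))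
        * ∑' n : ℕ, rf s n * rf ((l : ℝ) + 2) n / (rf ((l : ℝ) + 3) n * n.factorial)
            * (-(a * ζ)) ^ n := by
  rw [← tsum_mul_left]
  apply tsum_congr
  intro n
  have h3 : ((l : ℝ) + 3) = ((l : ℝ) + 2) + 1 := by ring
  have hkey : rf ((l : ℝ) + 2) n * (((l : ℝ) + 2) + n) = ((l : ℝ) + 2) * rf ((l : ℝ) + 2 + 1) n :=
    rf_shift _ n
  have hrf3 : 0 < rf ((l : ℝ) + 3) n := rf_pos (by positivity) n
  have hrf3' : rf ((l : ℝ) + 3) n = rf ((l : ℝ) + 2 + 1) n := by rw [h3]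
  have hl2 : (0:ℝ) < (l : ℝ) + 2 := by positivity
  have hl2n : (0:ℝ) < (l : ℝ) + 2 + n := by positivity
  have hfn : (0:ℝ) < n.factorial := by positivity
  have hrf21 : 0 < rf ((l : ℝ) + 2 + 1) n := by rw [← h3]; exact hrf3
  have hratio : rf ((l : ℝ) + 2) n / (rf ((l : ℝ) + 2 + 1) n * n.factorial)
      = ((l : ℝ) + 2) / ((((l : ℝ) + 2) + n) * n.factorial) := by
    rw [div_eq_div_iff (by positivity) (by positivity)]
    linear_combination (n.factorial : ℝ) * hkey
  rw [pow_add, show -(a * ζ) = (-a) * ζ from by ring, mul_pow, hrf3']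
  rw [show rf s n * rf ((l : ℝ) + 2) n / (rf ((l : ℝ) + 2 + 1) n * n.factorial)
      = rf s n * (rf ((l : ℝ) + 2) n / (rf ((l : ℝ) + 2 + 1) n * n.factorial)) from by ring,
    hratio]
  field_simp

end Aux

/-- For the ratio density `h` written in its finite-sum (polynomial-times-power) form, if
`0 ≤ ζ_l < ζ_u` and `η(β-δ)ζ_u/c < 1`, then `∫_{ζ_l}^{ζ_u} x h(x) dx` equals the stated
finite sum of Gauss hypergeometric series evaluations. -/
theorem stmt_10 (α c : ℝ) (m : ℕ) (β δ k η : ℝ)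
    (hα : 0 < α) (hc : 0 < c) (hm : 0 < m) (hδ : 0 < δ) (hδβ : δ < β)
    (hk : 0 < k) (hη : 0 < η)
    (cl : ℕ → ℝ)
    (hcl : ∀ l : ℕ, cl l = (-1 : ℝ) ^ l * rf (1 - (m : ℝ)) l / ((l.factorial : ℝ)) ^ 2)
    (h : ℝ → ℝ)
    (hh : ∀ x : ℝ, 0 < x →
      h x = α / (Real.Gamma k * η ^ k) *
        ∑ l ∈ Finset.range m,
          cl l * (δ * x / c) ^ l * Real.Gamma ((l : ℝ) + k + 1)
            * ((β - δ) * x / c + 1 / η) ^ (-((l : ℝ) + k + 1)))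
    (ζl ζu : ℝ) (h0 : 0 ≤ ζl) (hlu : ζl < ζu) (hb : η * (β - δ) * ζu / c < 1)
    (G : ℕ → ℝ → ℝ)
    (hG : ∀ (l : ℕ) (ζ : ℝ),
      G l ζ = ∑' n : ℕ,
        rf ((l : ℝ) + k + 1) n * rf ((l : ℝ) + 2) n
          / (rf ((l : ℝ) + 3) n * (n.factorial : ℝ))
          * (-(η * (β - δ) * ζ / c)) ^ n) :
    ∫ x in ζl..ζu, x * h x
      = α / (Real.Gamma k * η ^ k) *
          ∑ l ∈ Finset.range m,
            cl l * (δ / c) ^ l * Real.Gamma ((l : ℝ) + k + 1) * η ^ ((l : ℝ) + k + 1)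
              * (1 / ((l : ℝ) + 2))
              * (ζu ^ (l + 2) * G l ζu - ζl ^ (l + 2) * G l ζl) := by
  have hβδ : 0 < β - δ := by linarith
  set a : ℝ := η * (β - δ) / c with hadef
  have ha : 0 < a := by rw [hadef]; positivity
  set K : ℝ := α / (Real.Gamma k * η ^ k) with hKdef
  set C : ℕ → ℝ := fun l =>
    K * (cl l * (δ / c) ^ l * Real.Gamma ((l : ℝ) + k + 1) * η ^ ((l : ℝ) + k + 1)) with hCdef
  set ψ : ℕ → ℝ → ℝ := fun l x => x ^ (l + 1) * (1 + a * x) ^ (-((l : ℝ) + k + 1)) with hψdef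
  have hbu : a * ζu < 1 := by
    have : a * ζu = η * (β - δ) * ζu / c := by rw [hadef]; ring
    rw [this]; exact hb
  -- a.e. equality of integrands
  have hae : ∀ x ∈ Set.Ioc ζl ζu, x * h x = ∑ l ∈ Finset.range m, C l * ψ l x := by
    intro x hx
    have hx0 : 0 < x := lt_of_le_of_lt h0 hx.1
    rw [hh x hx0, Finset.mul_sum, Finset.mul_sum]
    apply Finset.sum_congr rfl
    intro l _
    have h1ax : 0 < 1 + a * x := by nlinarith
    have hbase : (β - δ) * x / c + 1 / η = (1 + a * x) / η := by
      rw [hadef]; field_simp; ring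
    have hrw : ((β - δ) * x / c + 1 / η) ^ (-((l : ℝ) + k + 1))
        = η ^ ((l : ℝ) + k + 1) * (1 + a * x) ^ (-((l : ℝ) + k + 1)) := by
      rw [hbase, Real.div_rpow h1ax.le hη.le, Real.rpow_neg hη.le, div_eq_mul_inv, inv_inv]
      ring
    have hdx : δ * x / c = (δ / c) * x := by ring
    rw [hrw, hdx, mul_pow, hCdef, hψdef]
    simp only []
    ring
  have hIcongr : (∫ x in ζl..ζu, x * h x)
      = ∫ x in ζl..ζu, ∑ l ∈ Finset.range m, C l * ψ l x := by
    apply intervalIntegral.integral_congr_ae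
    apply Filter.Eventually.of_forall
    intro x hx
    rw [Set.uIoc_of_le hlu.le] at hx
    exact hae x hx
  -- integrability of each term
  have hψint : ∀ l : ℕ, IntervalIntegrable (fun x => C l * ψ l x)
      MeasureTheory.volume ζl ζu := by
    intro l
    apply ContinuousOn.intervalIntegrable
    have hcont : ContinuousOn
        (fun x : ℝ => C l * (x ^ (l + 1) * (1 + a * x) ^ (-((l : ℝ) + k + 1))))
        (Set.uIcc ζl ζu) := by
      apply ContinuousOn.mul continuousOn_const
      apply ContinuousOn.mul (continuous_pow (l + 1)).continuousOn
      apply ContinuousOn.rpow_const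
      · exact (continuous_const.add (continuous_const.mul continuous_id)).continuousOn
      · intro x hx
        rw [Set.uIcc_of_le hlu.le] at hx
        have : 0 < 1 + a * x := by nlinarith [hx.1]
        exact Or.inl this.ne'
    exact hcont
  have hIsum : (∫ x in ζl..ζu, ∑ l ∈ Finset.range m, C l * ψ l x)
      = ∑ l ∈ Finset.range m, C l * ∫ x in ζl..ζu, ψ l x := by
    rw [intervalIntegral.integral_finset_sum (fun l _ => hψint l)]
    apply Finset.sum_congr rfl
    intro l _
    exact intervalIntegral.integral_const_mul _ _
  -- evaluate each integral
  have hval : ∀ l : ℕ, (∫ x in ζl..ζu, ψ l x)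
      = ζu ^ (l + 2) * (1 / ((l : ℝ) + 2)) * G l ζu
        - ζl ^ (l + 2) * (1 / ((l : ℝ) + 2)) * G l ζl := by
    intro l
    have hs : 0 < (l : ℝ) + k + 1 := by positivity
    have hki := key_integral ((l : ℝ) + k + 1) a hs ha l ζl ζu h0 hlu hbu
    have haζu : η * (β - δ) * ζu / c = a * ζu := by rw [hadef]; ring
    have haζl : η * (β - δ) * ζl / c = a * ζl := by rw [hadef]; ring
    rw [hψdef]
    simp only []
    rw [hki, bridge _ a hs l ζu, bridge _ a hs l ζl, hG l ζu, hG l ζl, haζu, haζl]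
  rw [hIcongr, hIsum, Finset.mul_sum]
  apply Finset.sum_congr rfl
  intro l _
  rw [hval l, hCdef]
  ring
end

section
/- Fix θ > 0, n > 0, κ ∈ ℝ, and let Ψ, ζ_l, ζ_u be the clamped-linear approximation data with ζ_l ≥ 0. Let X be a nonnegative real random variable and K > 0 with Kζ_u ≤ 1 such that P(X ≤ x) = Kx for all x ∈ [0, ζ_u]. Then E[Ψ(X)] = Kκ. (Exact evaluation of the approximated decoding error probability under a CDF that is linear on the relevant interval, as in the high-SNR asymptotics.) -/
open MeasureTheory

/-- Clamped-linear approximation of the Q-function: given `θ > 0`, `n > 0`, `κ ∈ ℝ`,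
`Ψ(x) = 1` for `x ≤ ζ_l`, `Ψ(x) = 1/2 - θ√n (x - κ)` for `ζ_l < x < ζ_u`, `Ψ(x) = 0` for
`x ≥ ζ_u`, where `ζ_l = κ - 1/(2θ√n)` and `ζ_u = κ + 1/(2θ√n)`. -/
noncomputable def clampLin (θ n κ : ℝ) (x : ℝ) : ℝ :=
  if x ≤ κ - 1 / (2 * θ * Real.sqrt n) then 1
  else if x < κ + 1 / (2 * θ * Real.sqrt n) then 1 / 2 - θ * Real.sqrt n * (x - κ)
  else 0

/-- If the CDF of a nonnegative random variable `X` is linear with slope `K` on `[0, ζ_u]`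
(with `Kζ_u ≤ 1`) and `ζ_l ≥ 0`, then `E[Ψ(X)] = Kκ`: exact evaluation of the approximated
decoding error probability under a CDF that is linear on the relevant interval (high-SNR
asymptotics). -/
theorem stmt_12 {Ωs : Type*} [MeasurableSpace Ωs] (μ : Measure Ωs) [IsProbabilityMeasure μ]
    (θ n κ ζl ζu : ℝ) (hθ : 0 < θ) (hn : 0 < n)
    (hζl : ζl = κ - 1 / (2 * θ * Real.sqrt n))
    (hζu : ζu = κ + 1 / (2 * θ * Real.sqrt n))
    (hζl0 : 0 ≤ ζl)
    (X : Ωs → ℝ) (hXm : Measurable X) (hX0 : ∀ ω, 0 ≤ X ω)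
    (K : ℝ) (hK : 0 < K) (hKζu : K * ζu ≤ 1)
    (hcdf : ∀ x : ℝ, 0 ≤ x → x ≤ ζu → (μ {ω | X ω ≤ x}).toReal = K * x) :
    ∫ ω, clampLin θ n κ (X ω) ∂μ = K * κ := by
  have hs : 0 < Real.sqrt n := Real.sqrt_pos.mpr hn
  set s := Real.sqrt n with hsdef
  have hts : 0 < θ * s := mul_pos hθ hs
  set d : ℝ := 1 / (2 * θ * s) with hd
  have hd0 : 0 < d := by positivity
  -- basic bounds on clampLin
  have hnn : ∀ x : ℝ, 0 ≤ clampLin θ n κ x := by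
    intro x
    unfold clampLin
    split_ifs with h1 h2
    · norm_num
    · rw [← hsdef]
      rw [← hsdef, ← hd] at h2
      have : θ * s * (x - κ) < θ * s * d := by
        apply mul_lt_mul_of_pos_left _ hts
        linarith
      have hdval : θ * s * d = 1 / 2 := by
        field_simp [hd]
        rw [hd]; field_simp [hθ.ne', hs.ne']
      linarith
    · exact le_refl _
  have hnn' : ∀ x : ℝ, 0 ≤ clampLin θ n κ x := hnn
  have hle1 : ∀ x : ℝ, clampLin θ n κ x ≤ 1 := by
    intro x
    unfold clampLin
    split_ifs with h1 h2
    · exact le_refl _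
    · rw [← hsdef]
      rw [← hsdef, ← hd] at h1
      push_neg at h1
      have : θ * s * (-d) < θ * s * (x - κ) := by
        apply mul_lt_mul_of_pos_left _ hts
        linarith
      have hdval : θ * s * d = 1 / 2 := by
        field_simp [hd]
        rw [hd]; field_simp [hθ.ne', hs.ne']
      nlinarith
    · norm_num
  -- measurability / integrability
  have hmeas : Measurable fun x : ℝ => clampLin θ n κ x := by
    unfold clampLin
    apply Measurable.ite (measurableSet_le measurable_id measurable_const)
      measurable_const
    exact Measurable.ite (measurableSet_lt measurable_id measurable_const)
      (by fun_prop) measurable_const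
  have hfm : Measurable fun ω => clampLin θ n κ (X ω) := hmeas.comp hXm
  have hint : Integrable (fun ω => clampLin θ n κ (X ω)) μ := by
    apply Integrable.mono' (integrable_const (1 : ℝ)) hfm.aestronglyMeasurable
    filter_upwards with ω
    rw [Real.norm_eq_abs, abs_of_nonneg (hnn _)]
    exact hle1 _
  rw [hint.integral_eq_integral_Ioc_meas_le (M := 1)
    (Filter.Eventually.of_forall fun ω => hnn _)
    (Filter.Eventually.of_forall fun ω => hle1 _)]
  -- identify the level sets
  have hsets : ∀ t ∈ Set.Ioc (0:ℝ) 1,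
      (μ {a | t ≤ clampLin θ n κ (X a)}).toReal = K * (ζu - 2 * t * d) := by
    intro t ht
    obtain ⟨ht0, ht1⟩ := ht
    have hset : {a | t ≤ clampLin θ n κ (X a)} = {a | X a ≤ ζu - 2 * t * d} := by
      ext a
      simp only [Set.mem_setOf_eq]
      set x := X a
      have hdval : θ * s * d = 1 / 2 := by
        field_simp [hd]
        rw [hd]; field_simp [hθ.ne', hs.ne']
      unfold clampLin
      rw [← hsdef, ← hd, hζu]
      split_ifs with h1 h2
      · constructor
        · intro _
          nlinarith
        · intro _; exact ht1
      · push_neg at h1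
        constructor
        · intro h
          nlinarith
        · intro h
          nlinarith
      · push_neg at h1 h2
        constructor
        · intro h; linarith
        · intro h
          nlinarith
    rw [hset]
    apply hcdf
    · have : ζl ≤ ζu - 2 * t * d := by
        rw [hζl, hζu]
        nlinarith
      linarith
    · nlinarith
  rw [setIntegral_congr_fun measurableSet_Ioc (fun t ht => (measureReal_def _ _).trans (hsets t ht)),
    ← intervalIntegral.integral_of_le (by norm_num : (0:ℝ) ≤ 1)]
  have hcomp : ∫ t in (0:ℝ)..1, K * (ζu - 2 * t * d) = K * (ζu - d) := by
    have : (fun t : ℝ => K * (ζu - 2 * t * d)) = fun t : ℝ => K * ζu - (2 * K * d) * t := by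
      funext t; ring
    rw [this, intervalIntegral.integral_sub intervalIntegrable_const
      ((_root_.intervalIntegral.intervalIntegrable_id).const_mul _),
      intervalIntegral.integral_const, intervalIntegral.integral_const_mul,
      integral_id]
    norm_num
    ring
  rw [hcomp, hζu]
  ring
end
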